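/- Let Z1 and Z2 be edge sets of (nonempty) simple cycles in a finite simple graph K, and let T = Z1 × Z2 ⊆ K² be the corresponding torus. Then the only cellular 2-cycles contained in T are the empty set and T itself; in particular T contains exactly one nonempty cellular 2-cycle. -/

import Mathlib

/-- A 1-cycle in a simple graph `G` is a set `C` of edges of `G` such that every
vertex is incident to an even number of edges of `C`. -/
def IsOneCycle {V : Type*} [DecidableEq V] (G : SimpleGraph V) (C : Finset (Sym2 V)) : Prop :=
  (∀ e ∈ C, e ∈ G.edgeSet) ∧ ∀ v : V, Even (C.filter (fun e => v ∈ e)).card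

/-- A cellular 2-cycle in `K²` is a set `C` of ordered pairs of edges of `K` such that
for every edge `σ`, both sections `{τ : (σ,τ) ∈ C}` and `{τ : (τ,σ) ∈ C}` are 1-cycles. -/
def IsCellular2Cycle {V : Type*} [DecidableEq V] (G : SimpleGraph V)
    (C : Finset (Sym2 V × Sym2 V)) : Prop :=
  (∀ p ∈ C, p.1 ∈ G.edgeSet ∧ p.2 ∈ G.edgeSet) ∧
  ∀ σ : Sym2 V,
    IsOneCycle G ((C.filter (fun p => p.1 = σ)).image Prod.snd) ∧
    IsOneCycle G ((C.filter (fun p => p.2 = σ)).image Prod.fst)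

section Helpers
open SimpleGraph

variable {V : Type*} [DecidableEq V] {G : SimpleGraph V}

lemma walk_countP_bound (u : V) : ∀ {a b : V} (p : G.Walk a b),
    p.edges.countP (fun e => u ∈ e) + (if u = a then 1 else 0) + (if u = b then 1 else 0)
      ≤ 2 * p.support.count u
  | a, _, .nil => by
      simp only [Walk.edges_nil, Walk.support_nil, List.countP_nil, List.count_cons,
        List.count_nil]
      split_ifs <;> simp_all <;> omega
  | a, b, .cons h q => by
      have ih := walk_countP_bound u q
      rw [Walk.edges_cons, Walk.support_cons, List.countP_cons, List.count_cons]
      simp only [decide_eq_true_eq, Sym2.mem_iff] at *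
      split_ifs <;> simp_all <;> omega

lemma cycle_countP_le_two {v : V} {w : G.Walk v v} (hc : w.IsCycle) (u : V) :
    w.edges.countP (fun e => u ∈ e) ≤ 2 := by
  have hb := walk_countP_bound u w
  have hsupp : w.support = v :: w.support.tail := w.support_eq_cons
  have hnd : w.support.tail.Nodup := hc.2
  rcases eq_or_ne u v with rfl | h
  · have hvmem : u ∈ w.support.tail := by
      cases w with
      | nil => exact absurd hc Walk.IsCycle.not_of_nil
      | cons h q => simpa using q.end_mem_support
    have : w.support.count u = 2 := by
      rw [hsupp, List.count_cons_self, List.count_eq_one_of_mem hnd hvmem]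
    simp only [if_pos rfl, eq_self_iff_true] at hb
    norm_num at hb
    omega
  · have : w.support.count u ≤ 1 := by
      rw [hsupp, List.count_cons_of_ne h.symm]
      exact List.nodup_iff_count_le_one.mp hnd u
    omega

lemma filter_toFinset_card {l : List (Sym2 V)} (hl : l.Nodup) (P : Sym2 V → Prop)
    [DecidablePred P] :
    (l.toFinset.filter P).card = l.countP (fun e => decide (P e)) := by
  rw [List.countP_eq_length_filter]
  have h1 : l.toFinset.filter P = (l.filter (fun e => decide (P e))).toFinset := by
    ext e; simp [List.mem_filter]
  rw [h1, List.toFinset_card_of_nodup (hl.filter _)]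

/-- Chain connectivity of edges along a walk. -/
lemma walk_edges_propagate :
    ∀ {a b : V} (p : G.Walk a b) (S : Finset (Sym2 V))
    (_ : ∀ e₁ e₂ : Sym2 V, e₁ ∈ S → (∃ u, u ∈ e₁ ∧ u ∈ e₂) → e₂ ∈ p.edges → e₂ ∈ S),
    (∃ e ∈ p.edges, e ∈ S) → ∀ e ∈ p.edges, e ∈ S
  | a, _, .nil => fun S _ _ => by simp
  | a, b, @Walk.cons _ _ _ c _ h q => fun S hcl => by
    intro hex e he
    have hcl' : ∀ e₁ e₂ : Sym2 V, e₁ ∈ S → (∃ u, u ∈ e₁ ∧ u ∈ e₂) → e₂ ∈ q.edges → e₂ ∈ S :=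
      fun e₁ e₂ h₁ hu h₂ => hcl e₁ e₂ h₁ hu (by rw [Walk.edges_cons]; exact List.mem_cons_of_mem _ h₂)
    rw [Walk.edges_cons] at he hex
    cases q with
    | nil =>
      simp only [Walk.edges_nil, List.mem_singleton] at he hex
      obtain ⟨e', he', hS⟩ := hex
      subst he; subst he'; exact hS
    | @cons _ d _ h' q' =>
      have hfst : s(c, d) ∈ (Walk.cons h' q').edges := by simp
      have key : s(a, c) ∈ S := by
        obtain ⟨e', he', hS⟩ := hex
        rcases List.mem_cons.mp he' with rfl | he''
        · exact hS
        · have : ∀ e ∈ (Walk.cons h' q').edges, e ∈ S :=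
            walk_edges_propagate (Walk.cons h' q') S hcl' ⟨e', he'', hS⟩
          have hfS := this _ hfst
          exact hcl _ _ hfS ⟨c, by simp, by simp⟩ (by simp)
      have hall : ∀ e ∈ (Walk.cons h' q').edges, e ∈ S := by
        refine walk_edges_propagate (Walk.cons h' q') S hcl' ⟨s(c,d), hfst, ?_⟩
        exact hcl' _ _ key ⟨c, by simp, by simp⟩ hfst
      rcases List.mem_cons.mp he with rfl | he''
      · exact key
      · exact hall _ he''


lemma subcycle_dichotomy {v : V} {w : G.Walk v v} (hc : w.IsCycle)
    {S : Finset (Sym2 V)} (hS : S ⊆ w.edges.toFinset)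
    (hev : ∀ u : V, Even ((S.filter (fun e => u ∈ e)).card)) :
    S = ∅ ∨ S = w.edges.toFinset := by
  rcases eq_or_ne S ∅ with rfl | hne
  · exact Or.inl rfl
  right
  obtain ⟨e₀, he₀⟩ := Finset.nonempty_iff_ne_empty.mpr hne
  have hcl : ∀ e₁ e₂ : Sym2 V, e₁ ∈ S → (∃ u, u ∈ e₁ ∧ u ∈ e₂) →
      e₂ ∈ w.edges.toFinset → e₂ ∈ S := by
    intro e₁ e₂ h₁ ⟨u, hu₁, hu₂⟩ h₂
    rcases eq_or_ne e₁ e₂ with rfl | hne'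
    · exact h₁
    -- the set of edges of w containing u
    have hT : (w.edges.toFinset.filter (fun e => u ∈ e)).card ≤ 2 := by
      rw [filter_toFinset_card hc.edges_nodup]
      exact cycle_countP_le_two hc u
    have hsub2 : ({e₁, e₂} : Finset (Sym2 V)) ⊆ w.edges.toFinset.filter (fun e => u ∈ e) := by
      intro e he
      rcases Finset.mem_insert.mp he with rfl | he
      · exact Finset.mem_filter.mpr ⟨hS h₁, hu₁⟩
      · rw [Finset.mem_singleton] at he; subst he
        exact Finset.mem_filter.mpr ⟨h₂, hu₂⟩
    have hcard2 : ({e₁, e₂} : Finset (Sym2 V)).card = 2 := Finset.card_pair hne'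
    have hTeq : w.edges.toFinset.filter (fun e => u ∈ e) = {e₁, e₂} :=
      (Finset.eq_of_subset_of_card_le hsub2 (by omega)).symm
    -- now the S-filter
    have hUsub : S.filter (fun e => u ∈ e) ⊆ ({e₁, e₂} : Finset (Sym2 V)) := by
      rw [← hTeq]
      exact Finset.filter_subset_filter _ hS
    have hmem1 : e₁ ∈ S.filter (fun e => u ∈ e) := Finset.mem_filter.mpr ⟨h₁, hu₁⟩
    have hUcard : (S.filter (fun e => u ∈ e)).card ≤ 2 :=
      le_trans (Finset.card_le_card hUsub) (by omega)
    have hpos : 0 < (S.filter (fun e => u ∈ e)).card := Finset.card_pos.mpr ⟨e₁, hmem1⟩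
    have heven := hev u
    have : (S.filter (fun e => u ∈ e)).card = 2 := by
      rcases heven with ⟨k, hk⟩; omega
    have hUeq : S.filter (fun e => u ∈ e) = ({e₁, e₂} : Finset (Sym2 V)) :=
      Finset.eq_of_subset_of_card_le hUsub (by omega)
    have : e₂ ∈ S.filter (fun e => u ∈ e) := by
      rw [hUeq]; exact Finset.mem_insert_of_mem (Finset.mem_singleton_self e₂)
    exact (Finset.mem_filter.mp this).1
  -- propagate along the walk
  have hcl' : ∀ e₁ e₂ : Sym2 V, e₁ ∈ S → (∃ u, u ∈ e₁ ∧ u ∈ e₂) →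
      e₂ ∈ w.edges → e₂ ∈ S := fun e₁ e₂ h₁ hu h₂ => hcl e₁ e₂ h₁ hu (List.mem_toFinset.mpr h₂)
  have hall : ∀ e ∈ w.edges, e ∈ S :=
    walk_edges_propagate w S hcl' ⟨e₀, List.mem_toFinset.mp (hS he₀), he₀⟩
  refine Finset.Subset.antisymm hS (fun e he => hall e (List.mem_toFinset.mp he))

lemma cycle_isOneCycle {v : V} {w : G.Walk v v} (hc : w.IsCycle) :
    IsOneCycle G w.edges.toFinset := by
  constructor
  · intro e he
    exact w.edges_subset_edgeSet (List.mem_toFinset.mp he)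
  · intro u
    rw [filter_toFinset_card hc.edges_nodup]
    have := hc.isTrail.even_countP_edges_iff u
    simpa using this.mpr (by simp)

lemma empty_isOneCycle : IsOneCycle G (∅ : Finset (Sym2 V)) := by
  constructor
  · intro e he; simp at he
  · intro u; simp

lemma section_mem {C : Finset (Sym2 V × Sym2 V)} {σ τ : Sym2 V} :
    τ ∈ (C.filter (fun p => p.1 = σ)).image Prod.snd ↔ (σ, τ) ∈ C := by
  simp only [Finset.mem_image, Finset.mem_filter]
  constructor
  · rintro ⟨⟨a, b⟩, ⟨hmem, rfl⟩, rfl⟩; exact hmem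
  · intro h; exact ⟨(σ, τ), ⟨h, rfl⟩, rfl⟩

lemma section_mem' {C : Finset (Sym2 V × Sym2 V)} {σ τ : Sym2 V} :
    τ ∈ (C.filter (fun p => p.2 = σ)).image Prod.fst ↔ (τ, σ) ∈ C := by
  simp only [Finset.mem_image, Finset.mem_filter]
  constructor
  · rintro ⟨⟨a, b⟩, ⟨hmem, rfl⟩, rfl⟩; exact hmem
  · intro h; exact ⟨(τ, σ), ⟨h, rfl⟩, rfl⟩

end Helpers

/-- If `Z₁, Z₂` are edge sets of simple cycles in `K` and `T = Z₁ × Z₂` is the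
corresponding torus in `K²`, then the only cellular 2-cycles contained in `T` are the
empty set and `T` itself (in particular, `T` contains exactly one nonempty cellular
2-cycle, namely `T`). -/
theorem cellular2Cycle_in_torus {V : Type*} [Fintype V] [DecidableEq V]
    (G : SimpleGraph V) (Z₁ Z₂ : Finset (Sym2 V))
    (h₁ : ∃ (v : V) (w : G.Walk v v), w.IsCycle ∧ Z₁ = w.edges.toFinset)
    (h₂ : ∃ (v : V) (w : G.Walk v v), w.IsCycle ∧ Z₂ = w.edges.toFinset) :
    IsCellular2Cycle G (Z₁ ×ˢ Z₂) ∧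
    ∀ C : Finset (Sym2 V × Sym2 V), C ⊆ Z₁ ×ˢ Z₂ → IsCellular2Cycle G C →
      C = ∅ ∨ C = Z₁ ×ˢ Z₂ := by
  obtain ⟨v₁, w₁, hc₁, rfl⟩ := h₁
  obtain ⟨v₂, w₂, hc₂, rfl⟩ := h₂
  set Z₁ := w₁.edges.toFinset with hZ₁
  set Z₂ := w₂.edges.toFinset with hZ₂
  have hZ₁cyc := cycle_isOneCycle hc₁
  have hZ₂cyc := cycle_isOneCycle hc₂
  -- section computations for the full torus
  have hrowT : ∀ σ : Sym2 V, ((Z₁ ×ˢ Z₂).filter (fun p => p.1 = σ)).image Prod.snd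
      = if σ ∈ Z₁ then Z₂ else ∅ := by
    intro σ; ext τ
    rw [section_mem]
    by_cases h : σ ∈ Z₁ <;> simp [Finset.mem_product, h]
  have hcolT : ∀ σ : Sym2 V, ((Z₁ ×ˢ Z₂).filter (fun p => p.2 = σ)).image Prod.fst
      = if σ ∈ Z₂ then Z₁ else ∅ := by
    intro σ; ext τ
    rw [section_mem']
    by_cases h : σ ∈ Z₂ <;> simp [Finset.mem_product, h]
  constructor
  · refine ⟨fun p hp => ?_, fun σ => ⟨?_, ?_⟩⟩
    · rw [Finset.mem_product] at hp
      exact ⟨w₁.edges_subset_edgeSet (List.mem_toFinset.mp hp.1),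
        w₂.edges_subset_edgeSet (List.mem_toFinset.mp hp.2)⟩
    · rw [hrowT]; split
      · exact hZ₂cyc
      · exact empty_isOneCycle
    · rw [hcolT]; split
      · exact hZ₁cyc
      · exact empty_isOneCycle
  · intro C hsub hcell
    rcases eq_or_ne C ∅ with rfl | hne
    · exact Or.inl rfl
    right
    obtain ⟨⟨σ₀, τ₀⟩, hp₀⟩ := Finset.nonempty_iff_ne_empty.mpr hne
    -- row dichotomy
    have hrow : ∀ σ : Sym2 V, (C.filter (fun p => p.1 = σ)).image Prod.snd = ∅ ∨
        (C.filter (fun p => p.1 = σ)).image Prod.snd = Z₂ := by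
      intro σ
      refine subcycle_dichotomy hc₂ ?_ ((hcell.2 σ).1).2
      intro τ hτ
      rw [section_mem] at hτ
      exact (Finset.mem_product.mp (hsub hτ)).2
    have hcol : ∀ σ : Sym2 V, (C.filter (fun p => p.2 = σ)).image Prod.fst = ∅ ∨
        (C.filter (fun p => p.2 = σ)).image Prod.fst = Z₁ := by
      intro σ
      refine subcycle_dichotomy hc₁ ?_ ((hcell.2 σ).2).2
      intro τ hτ
      rw [section_mem'] at hτ
      exact (Finset.mem_product.mp (hsub hτ)).1
    -- the row of σ₀ is full
    have hrow₀ : (C.filter (fun p => p.1 = σ₀)).image Prod.snd = Z₂ := by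
      rcases hrow σ₀ with h | h
      · exfalso
        have : τ₀ ∈ (C.filter (fun p => p.1 = σ₀)).image Prod.snd := section_mem.mpr hp₀
        rw [h] at this; simp at this
      · exact h
    refine Finset.Subset.antisymm hsub (fun p hp => ?_)
    obtain ⟨σ, τ⟩ := p
    rw [Finset.mem_product] at hp
    -- (σ₀, τ) ∈ C
    have hστ₀ : (σ₀, τ) ∈ C := by
      rw [← section_mem, hrow₀]; exact hp.2
    -- column τ is full
    have hcolτ : (C.filter (fun p => p.2 = τ)).image Prod.fst = Z₁ := by
      rcases hcol τ with h | h
      · exfalso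
        have : σ₀ ∈ (C.filter (fun p => p.2 = τ)).image Prod.fst := section_mem'.mpr hστ₀
        rw [h] at this; simp at this
      · exact h
    rw [← section_mem', hcolτ]
    exact hp.1
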